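/- For any h with 1 ≤ h ≤ n−1, the h-embedded edge-connectivity of the hypercube satisfies η_h(Q_n) ≤ 2^h (n−h). -/

import Mathlib

open SimpleGraph

def cubeGraph (n : ℕ) : SimpleGraph (Fin n → Bool) where
  Adj x y := ∃! i, x i ≠ y i
  symm := by
    refine ⟨?_⟩
    rintro x y ⟨i, hi, hu⟩
    exact ⟨i, hi.symm, fun j hj => hu j hj.symm⟩
  loopless := by refine ⟨?_⟩; rintro x ⟨i, hi, -⟩; exact hi rfl

def starGraph (n : ℕ) [NeZero n] : SimpleGraph (Equiv.Perm (Fin n)) where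
  Adj x y := ∃ i : Fin n, i ≠ 0 ∧ y = x * Equiv.swap 0 i
  symm := by
    refine ⟨?_⟩
    rintro x y ⟨i, hi, rfl⟩
    exact ⟨i, hi, by rw [mul_assoc, Equiv.swap_mul_self, mul_one]⟩
  loopless := by
    refine ⟨?_⟩
    rintro x ⟨i, hi, h⟩
    exact hi (Equiv.swap_eq_one_iff.mp (left_eq_mul.mp h)).symm

def bubbleGraph (n : ℕ) : SimpleGraph (Equiv.Perm (Fin n)) where
  Adj x y := ∃ (i : Fin n) (hi : (i : ℕ) + 1 < n), y = x * Equiv.swap i ⟨(i : ℕ) + 1, hi⟩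
  symm := by
    refine ⟨?_⟩
    rintro x y ⟨i, hi, rfl⟩
    exact ⟨i, hi, by rw [mul_assoc, Equiv.swap_mul_self, mul_one]⟩
  loopless := by
    refine ⟨?_⟩
    rintro x ⟨i, hi, h⟩
    have h1 := Equiv.swap_eq_one_iff.mp (left_eq_mul.mp h)
    have := congrArg Fin.val h1
    simp at this

def IsEmbVertexCut {V W : Type*} (G : SimpleGraph V) (H : SimpleGraph W) (S : Set V) : Prop :=
  ¬ (G.induce Sᶜ).Connected ∧
    ∀ v ∉ S, ∃ A : Set V, v ∈ A ∧ Disjoint A S ∧ Nonempty (H ≃g G.induce A)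

noncomputable def embConn {V W : Type*} (G : SimpleGraph V) (H : SimpleGraph W) : ℕ :=
  sInf {k | ∃ S : Set V, S.Finite ∧ S.ncard = k ∧ IsEmbVertexCut G H S}

def IsEmbEdgeCut {V W : Type*} (G : SimpleGraph V) (H : SimpleGraph W) (F : Set (Sym2 V)) : Prop :=
  F ⊆ G.edgeSet ∧ ¬ (G.deleteEdges F).Connected ∧
    ∀ v : V, ∃ A : Set V, v ∈ A ∧ Nonempty (H ≃g (G.deleteEdges F).induce A)

noncomputable def embEdgeConn {V W : Type*} (G : SimpleGraph V) (H : SimpleGraph W) : ℕ :=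
  sInf {k | ∃ F : Set (Sym2 V), F.Finite ∧ F.ncard = k ∧ IsEmbEdgeCut G H F}

def IsSuperVertexCut {V : Type*} (G : SimpleGraph V) (h : ℕ) (S : Set V) : Prop :=
  ¬ (G.induce Sᶜ).Connected ∧ ∀ v ∉ S, h ≤ ((G.neighborSet v) \ S).ncard

noncomputable def superConn {V : Type*} (G : SimpleGraph V) (h : ℕ) : ℕ :=
  sInf {k | ∃ S : Set V, S.Finite ∧ S.ncard = k ∧ IsSuperVertexCut G h S}

def IsSuperEdgeCut {V : Type*} (G : SimpleGraph V) (h : ℕ) (F : Set (Sym2 V)) : Prop :=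
  F ⊆ G.edgeSet ∧ ¬ (G.deleteEdges F).Connected ∧
    ∀ v : V, h ≤ ((G.deleteEdges F).neighborSet v).ncard

noncomputable def superEdgeConn {V : Type*} (G : SimpleGraph V) (h : ℕ) : ℕ :=
  sInf {k | ∃ F : Set (Sym2 V), F.Finite ∧ F.ncard = k ∧ IsSuperEdgeCut G h F}

/-- The subcube with tail equal to that of `v`. -/
def qtail (n h : ℕ) (v : Fin n → Bool) : Set (Fin n → Bool) :=
  {x | ∀ i : Fin n, h ≤ (i : ℕ) → x i = v i}

def qA0 (n h : ℕ) : Set (Fin n → Bool) := qtail n h (fun _ => false)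

def qF (n h : ℕ) : Set (Sym2 (Fin n → Bool)) :=
  {e | ∃ x y, e = s(x, y) ∧ (cubeGraph n).Adj x y ∧ x ∈ qA0 n h ∧ y ∉ qA0 n h}

lemma qF_sub_edgeSet (n h : ℕ) : qF n h ⊆ (cubeGraph n).edgeSet := by
  rintro e ⟨x, y, rfl, hadj, -, -⟩
  exact hadj

lemma mem_qF_cases {n h : ℕ} {u w : Fin n → Bool} (he : s(u, w) ∈ qF n h) :
    (u ∈ qA0 n h ∧ w ∉ qA0 n h) ∨ (w ∈ qA0 n h ∧ u ∉ qA0 n h) := by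
  obtain ⟨x, y, hxy, -, hx, hy⟩ := he
  rw [Sym2.eq_iff] at hxy
  rcases hxy with ⟨rfl, rfl⟩ | ⟨rfl, rfl⟩
  · exact Or.inl ⟨hx, hy⟩
  · exact Or.inr ⟨hx, hy⟩

/-- Edges within a tail-fixed subcube are not deleted. -/
lemma not_mem_qF {n h : ℕ} {u w : Fin n → Bool}
    (htail : ∀ i : Fin n, h ≤ (i : ℕ) → u i = w i) : s(u, w) ∉ qF n h := by
  intro he
  have key : u ∈ qA0 n h ↔ w ∈ qA0 n h := by
    constructor
    · intro hu i hi; rw [← htail i hi]; exact hu i hi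
    · intro hw i hi; rw [htail i hi]; exact hw i hi
  rcases mem_qF_cases he with ⟨hx, hy⟩ | ⟨hx, hy⟩
  · exact hy (key.mp hx)
  · exact hy (key.mpr hx)

lemma qA0_closed {n h : ℕ} {u w : Fin n → Bool}
    (hadj : ((cubeGraph n).deleteEdges (qF n h)).Adj u w) (hu : u ∈ qA0 n h) :
    w ∈ qA0 n h := by
  rw [SimpleGraph.deleteEdges_adj] at hadj
  by_contra hw
  exact hadj.2 ⟨u, w, rfl, hadj.1, hu, hw⟩

lemma qA0_closed_reach {n h : ℕ} {u w : Fin n → Bool}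
    (hr : ((cubeGraph n).deleteEdges (qF n h)).Reachable u w) (hu : u ∈ qA0 n h) :
    w ∈ qA0 n h := by
  obtain ⟨p⟩ := hr
  induction p with
  | nil => exact hu
  | cons hadj _ ih => exact ih (qA0_closed hadj hu)

lemma qF_not_connected (n h : ℕ) (h2 : h + 1 ≤ n) :
    ¬ ((cubeGraph n).deleteEdges (qF n h)).Connected := by
  intro hc
  have hn : h < n := h2
  set y0 : Fin n → Bool := fun _ => true
  have hr := hc.preconnected (fun _ => false) y0
  have h0 : (fun _ => false) ∈ qA0 n h := fun i _ => rfl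
  have := qA0_closed_reach hr h0
  have := this ⟨h, hn⟩ (le_refl h)
  simp [y0] at this

/-- Extend a function on `Fin h` to `Fin n` using tail of `v`. -/
def qext (n h : ℕ) (v : Fin n → Bool) (a : Fin h → Bool) : Fin n → Bool :=
  fun i => if hi : (i : ℕ) < h then a ⟨i, hi⟩ else v i

lemma qext_mem (n h : ℕ) (v : Fin n → Bool) (a : Fin h → Bool) :
    qext n h v a ∈ qtail n h v := by
  intro i hi
  simp [qext, Nat.not_lt.mpr hi]

lemma qext_apply_lt (n h : ℕ) (v : Fin n → Bool) (a : Fin h → Bool) (i : Fin n)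
    (hlt : (i : ℕ) < h) : qext n h v a i = a ⟨i, hlt⟩ := dif_pos hlt

lemma qext_apply_ge (n h : ℕ) (v : Fin n → Bool) (a : Fin h → Bool) (i : Fin n)
    (hge : h ≤ (i : ℕ)) : qext n h v a i = v i := dif_neg (Nat.not_lt.mpr hge)

lemma qext_adj_iff (n h : ℕ) (hn : h ≤ n) (v : Fin n → Bool) (a b : Fin h → Bool) :
    (cubeGraph n).Adj (qext n h v a) (qext n h v b) ↔ (cubeGraph h).Adj a b := by
  have hne : ∀ i : Fin n, (qext n h v a i ≠ qext n h v b i) ↔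
      ∃ hlt : (i : ℕ) < h, a ⟨i, hlt⟩ ≠ b ⟨i, hlt⟩ := by
    intro i
    by_cases hlt : (i : ℕ) < h
    · rw [qext_apply_lt n h v a i hlt, qext_apply_lt n h v b i hlt]
      exact ⟨fun hd => ⟨hlt, hd⟩, fun ⟨_, hd⟩ => hd⟩
    · rw [qext_apply_ge n h v a i (Nat.not_lt.mp hlt), qext_apply_ge n h v b i (Nat.not_lt.mp hlt)]
      exact ⟨fun hd => absurd rfl hd, fun ⟨h', _⟩ => absurd h' hlt⟩
  constructor
  · rintro ⟨i, hi, hu⟩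
    obtain ⟨hlt, hd⟩ := (hne i).mp hi
    refine ⟨⟨i, hlt⟩, hd, fun j hj => ?_⟩
    have : (⟨(j : ℕ), lt_of_lt_of_le j.2 hn⟩ : Fin n) = i :=
      hu _ ((hne _).mpr ⟨j.2, by simpa using hj⟩)
    have hv : (j : ℕ) = (i : ℕ) := congrArg Fin.val this
    exact Fin.ext hv
  · rintro ⟨j, hj, hu⟩
    refine ⟨⟨(j : ℕ), lt_of_lt_of_le j.2 hn⟩, (hne _).mpr ⟨j.2, by simpa using hj⟩, fun i hi => ?_⟩
    obtain ⟨hlt, hd⟩ := (hne i).mp hi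
    have : (⟨(i : ℕ), hlt⟩ : Fin h) = j := hu _ hd
    exact Fin.ext congr(($this : Fin h).val)

noncomputable def qiso (n h : ℕ) (hn : h ≤ n) (v : Fin n → Bool) :
    cubeGraph h ≃g ((cubeGraph n).deleteEdges (qF n h)).induce (qtail n h v) where
  toFun a := ⟨qext n h v a, qext_mem n h v a⟩
  invFun x := fun j => x.1 ⟨(j : ℕ), lt_of_lt_of_le j.2 hn⟩
  left_inv a := by
    funext j
    show qext n h v a ⟨(j : ℕ), lt_of_lt_of_le j.2 hn⟩ = a j
    rw [qext_apply_lt n h v a _ j.2]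
  right_inv x := by
    apply Subtype.ext
    funext i
    show qext n h v (fun j => x.1 ⟨(j : ℕ), lt_of_lt_of_le j.2 hn⟩) i = x.1 i
    by_cases hlt : (i : ℕ) < h
    · rw [qext_apply_lt n h v _ i hlt]
    · rw [qext_apply_ge n h v _ i (Nat.not_lt.mp hlt)]
      exact (x.2 i (Nat.not_lt.mp hlt)).symm
  map_rel_iff' := by
    intro a b
    simp only [Equiv.coe_fn_mk, SimpleGraph.comap_adj, Function.Embedding.coe_subtype,
      SimpleGraph.deleteEdges_adj]
    constructor
    · rintro ⟨hadj, -⟩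
      exact (qext_adj_iff n h hn v a b).mp hadj
    · intro hadj
      refine ⟨(qext_adj_iff n h hn v a b).mpr hadj, not_mem_qF fun i hi => ?_⟩
      rw [qext_apply_ge n h v a i hi, qext_apply_ge n h v b i hi]

def qcut (n h : ℕ) (h2 : h + 1 ≤ n) : (Fin h → Bool) × Fin (n - h) → Sym2 (Fin n → Bool) :=
  fun p =>
    let x := qext n h (fun _ => false) p.1
    s(x, Function.update x ⟨(p.2 : ℕ) + h, by omega⟩ true)

lemma qF_subset_range (n h : ℕ) (h2 : h + 1 ≤ n) :
    qF n h ⊆ Set.range (qcut n h h2) := by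
  rintro e ⟨x, y, rfl, ⟨i0, hi0, hu⟩, hx, hy⟩
  simp only [qA0, qtail, Set.mem_setOf_eq, not_forall] at hy
  obtain ⟨i, hi, hyi⟩ := hy
  have hyi : y i = true := by
    cases hb : y i
    · exact absurd hb hyi
    · rfl
  have hxi : x i = false := hx i hi
  have hii0 : i = i0 := hu i (show x i ≠ y i by rw [hxi, hyi]; simp)
  have heq : ∀ j : Fin n, j ≠ i → x j = y j := by
    intro j hj
    by_contra hd
    exact hj ((hu j hd).trans hii0.symm)
  refine ⟨⟨fun j => x ⟨(j : ℕ), lt_of_lt_of_le j.2 (by omega)⟩, ⟨(i : ℕ) - h, by omega⟩⟩, ?_⟩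
  have hxeq : qext n h (fun _ => false) (fun j => x ⟨(j : ℕ), lt_of_lt_of_le j.2 (by omega)⟩) = x := by
    funext k
    by_cases hk : (k : ℕ) < h
    · rw [qext_apply_lt n h _ _ k hk]
    · rw [qext_apply_ge n h _ _ k (Nat.not_lt.mp hk)]
      exact (hx k (Nat.not_lt.mp hk)).symm
  have hidx : (⟨((⟨(i : ℕ) - h, by omega⟩ : Fin (n - h)) : ℕ) + h, by omega⟩ : Fin n) = i :=
    Fin.ext (by simp; omega)
  have hyeq : Function.update x i true = y := by
    funext j
    rcases eq_or_ne j i with rfl | hj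
    · rw [Function.update_self, hyi]
    · rw [Function.update_of_ne hj]
      exact heq j hj
  simp only [qcut, hxeq, hidx, hyeq]

lemma qF_ncard_le (n h : ℕ) (h2 : h + 1 ≤ n) : (qF n h).ncard ≤ 2 ^ h * (n - h) := by
  have h1 : (qF n h).ncard ≤ (Set.range (qcut n h h2)).ncard :=
    Set.ncard_le_ncard (qF_subset_range n h h2) (Set.toFinite _)
  have h2' : (Set.range (qcut n h h2)).ncard ≤ Nat.card ((Fin h → Bool) × Fin (n - h)) := by
    rw [← Nat.card_coe_set_eq]
    exact Finite.card_range_le _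
  have h3 : Nat.card ((Fin h → Bool) × Fin (n - h)) = 2 ^ h * (n - h) := by
    rw [Nat.card_eq_fintype_card, Fintype.card_prod, Fintype.card_fun, Fintype.card_bool,
      Fintype.card_fin, Fintype.card_fin]
  omega


/-- `η_h(Q_n) ≤ 2^h (n-h)` for `1 ≤ h ≤ n-1`. -/
theorem stmt2 (n h : ℕ) (h1 : 1 ≤ h) (h2 : h + 1 ≤ n) :
    embEdgeConn (cubeGraph n) (cubeGraph h) ≤ 2 ^ h * (n - h) := by
  have hn : h ≤ n := by omega
  have hmem : (qF n h).ncard ∈ {k | ∃ F : Set (Sym2 (Fin n → Bool)), F.Finite ∧ F.ncard = k ∧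
      IsEmbEdgeCut (cubeGraph n) (cubeGraph h) F} :=
    ⟨qF n h, Set.toFinite _, rfl, qF_sub_edgeSet n h, qF_not_connected n h h2,
      fun v => ⟨qtail n h v, fun i _ => rfl, ⟨qiso n h hn v⟩⟩⟩
  exact (Nat.sInf_le hmem).trans (qF_ncard_le n h h2)
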